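/- arXiv:2107.09459 — 2 statements merged into one kernel-verified Lean document; each statement's English description precedes it below -/
import Mathlib

section
/- Let K be a nonnegative n×n matrix and α, β ≥ 0 with α + β ≥ 1. Define S_{α,β}(K) to be the matrix with entries K(i,j)^α K(j,i)^β. Then r(S_{α,β}(K)) ≤ r(K)^{α+β}. -/
open scoped ENNReal
open Finset
noncomputable def specRad {n : ℕ} (A : Matrix (Fin n) (Fin n) ℝ) : ℝ≥0∞ :=
  spectralRadius ℂ (A.map (algebraMap ℝ ℂ))
noncomputable def opNorm {n : ℕ} (A : Matrix (Fin n) (Fin n) ℝ) : ℝ :=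
  ‖Matrix.toEuclideanCLM (𝕜 := ℝ) A‖

open Filter Matrix
open scoped Topology Matrix.Norms.L2Operator

lemma aux_sum_rpow_le {ι : Type*} (s : Finset ι) (b : ι → NNReal) {β : ℝ} (hβ : 1 ≤ β) :
    ∑ k ∈ s, b k ^ β ≤ (∑ k ∈ s, b k) ^ β := by
  set B := ∑ k ∈ s, b k with hB
  have h1 : ∀ k ∈ s, b k ^ β ≤ B ^ (β - 1) * b k := by
    intro k hk
    have hbk : b k ≤ B := Finset.single_le_sum (fun _ _ => zero_le) hk
    calc b k ^ β = b k ^ ((β - 1) + 1) := by congr 1; ring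
      _ = b k ^ (β - 1) * b k ^ (1 : ℝ) :=
          NNReal.rpow_add_of_nonneg _ (by linarith) zero_le_one
      _ = b k ^ (β - 1) * b k := by rw [NNReal.rpow_one]
      _ ≤ B ^ (β - 1) * b k :=
          mul_le_mul_left (NNReal.rpow_le_rpow hbk (by linarith)) (b k)
  calc ∑ k ∈ s, b k ^ β ≤ ∑ k ∈ s, B ^ (β - 1) * b k := Finset.sum_le_sum h1
    _ = B ^ (β - 1) * B := by rw [← Finset.mul_sum]
    _ = B ^ (β - 1) * B ^ (1 : ℝ) := by rw [NNReal.rpow_one]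
    _ = B ^ ((β - 1) + 1) := (NNReal.rpow_add_of_nonneg _ (by linarith) zero_le_one).symm
    _ = B ^ β := by congr 1; ring

lemma aux_key {ι : Type*} (s : Finset ι) (a b : ι → NNReal) {α β : ℝ}
    (hα : 0 ≤ α) (hβ : 0 ≤ β) (hab : 1 ≤ α + β) :
    ∑ k ∈ s, a k ^ α * b k ^ β ≤ (∑ k ∈ s, a k) ^ α * (∑ k ∈ s, b k) ^ β := by
  set A := ∑ k ∈ s, a k with hA
  set B := ∑ k ∈ s, b k with hB
  have hs : (0:ℝ) < α + β := by linarith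
  by_cases hA0 : A = 0
  · by_cases hα0 : α = 0
    · subst hα0
      simp only [NNReal.rpow_zero, one_mul]
      exact aux_sum_rpow_le s b (by linarith)
    · have hz : ∀ k ∈ s, a k = 0 := Finset.sum_eq_zero_iff.mp (by rw [← hA]; exact hA0)
      have : ∀ k ∈ s, a k ^ α * b k ^ β = 0 := fun k hk => by
        rw [hz k hk, NNReal.zero_rpow hα0, zero_mul]
      rw [Finset.sum_congr rfl this]
      simp
  by_cases hB0 : B = 0
  · by_cases hβ0 : β = 0
    · subst hβ0
      simp only [NNReal.rpow_zero, mul_one]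
      exact aux_sum_rpow_le s a (by linarith)
    · have hz : ∀ k ∈ s, b k = 0 := Finset.sum_eq_zero_iff.mp (by rw [← hB]; exact hB0)
      have : ∀ k ∈ s, a k ^ α * b k ^ β = 0 := fun k hk => by
        rw [hz k hk, NNReal.zero_rpow hβ0, mul_zero]
      rw [Finset.sum_congr rfl this]
      simp
  -- main case : A ≠ 0, B ≠ 0
  set α' : ℝ := α / (α + β) with hα'
  set β' : ℝ := β / (α + β) with hβ'
  have hα'0 : 0 ≤ α' := div_nonneg hα hs.le
  have hβ'0 : 0 ≤ β' := div_nonneg hβ hs.le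
  have hsum1 : α' + β' = 1 := by
    rw [hα', hβ', ← add_div, div_self hs.ne']
  have hα'le : α' ≤ α := by
    rw [hα', div_le_iff₀ hs]; nlinarith
  have hβ'le : β' ≤ β := by
    rw [hβ', div_le_iff₀ hs]; nlinarith
  set w₁ : NNReal := Real.toNNReal α' with hw₁
  set w₂ : NNReal := Real.toNNReal β' with hw₂
  have hw₁c : (w₁ : ℝ) = α' := Real.coe_toNNReal _ hα'0
  have hw₂c : (w₂ : ℝ) = β' := Real.coe_toNNReal _ hβ'0
  have hw : w₁ + w₂ = 1 := by
    rw [← NNReal.coe_inj, NNReal.coe_add, hw₁c, hw₂c, NNReal.coe_one]; exact hsum1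
  have key : ∀ k ∈ s, a k ^ α * b k ^ β * (A * B)
      ≤ (w₁ * (a k * B) + w₂ * (b k * A)) * (A ^ α * B ^ β) := by
    intro k hk
    have haA : a k ≤ A := Finset.single_le_sum (fun _ _ => zero_le) hk
    have hbB : b k ≤ B := Finset.single_le_sum (fun _ _ => zero_le) hk
    have eA : A ^ (α - α') * A = A ^ β' * A ^ α := by
      calc A ^ (α - α') * A = A ^ (α - α') * A ^ (1 : ℝ) := by rw [NNReal.rpow_one]
        _ = A ^ ((α - α') + 1) := (NNReal.rpow_add_of_nonneg A (by linarith) zero_le_one).symm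
        _ = A ^ (β' + α) := by congr 1; linarith
        _ = A ^ β' * A ^ α := NNReal.rpow_add_of_nonneg A hβ'0 hα
    have eB : B ^ (β - β') * B = B ^ α' * B ^ β := by
      calc B ^ (β - β') * B = B ^ (β - β') * B ^ (1 : ℝ) := by rw [NNReal.rpow_one]
        _ = B ^ ((β - β') + 1) := (NNReal.rpow_add_of_nonneg B (by linarith) zero_le_one).symm
        _ = B ^ (α' + β) := by congr 1; linarith
        _ = B ^ α' * B ^ β := NNReal.rpow_add_of_nonneg B hα'0 hβ
    calc a k ^ α * b k ^ β * (A * B)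
        = (a k ^ α' * a k ^ (α - α')) * (b k ^ β' * b k ^ (β - β')) * (A * B) := by
          rw [← NNReal.rpow_add_of_nonneg _ hα'0 (by linarith),
            ← NNReal.rpow_add_of_nonneg _ hβ'0 (by linarith)]
          congr 3 <;> [skip; skip] <;> congr 1 <;> ring
      _ ≤ (a k ^ α' * A ^ (α - α')) * (b k ^ β' * B ^ (β - β')) * (A * B) :=
          mul_le_mul_left
            (mul_le_mul' (mul_le_mul_right (NNReal.rpow_le_rpow haA (by linarith)) _)
              (mul_le_mul_right (NNReal.rpow_le_rpow hbB (by linarith)) _)) _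
      _ = (a k ^ α' * b k ^ β') * ((A ^ (α - α') * A) * (B ^ (β - β') * B)) := by ring
      _ = (a k ^ α' * b k ^ β') * ((A ^ β' * A ^ α) * (B ^ α' * B ^ β)) := by rw [eA, eB]
      _ = ((a k * B) ^ α' * (b k * A) ^ β') * (A ^ α * B ^ β) := by
          rw [NNReal.mul_rpow, NNReal.mul_rpow]; ring
      _ ≤ (w₁ * (a k * B) + w₂ * (b k * A)) * (A ^ α * B ^ β) := by
          apply mul_le_mul_left
          have := NNReal.geom_mean_le_arith_mean2_weighted w₁ w₂ (a k * B) (b k * A) hw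
          rwa [hw₁c, hw₂c] at this
  have hsum : ∑ k ∈ s, (w₁ * (a k * B) + w₂ * (b k * A)) = A * B := by
    rw [Finset.sum_add_distrib]
    have e1 : ∑ k ∈ s, w₁ * (a k * B) = w₁ * (A * B) := by
      rw [← Finset.mul_sum, ← Finset.sum_mul, ← hA]
    have e2 : ∑ k ∈ s, w₂ * (b k * A) = w₂ * (B * A) := by
      rw [← Finset.mul_sum, ← Finset.sum_mul, ← hB]
    rw [e1, e2]
    calc w₁ * (A * B) + w₂ * (B * A) = (w₁ + w₂) * (A * B) := by ring
      _ = A * B := by rw [hw, one_mul]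
  have main : (∑ k ∈ s, a k ^ α * b k ^ β) * (A * B) ≤ (A ^ α * B ^ β) * (A * B) := by
    calc (∑ k ∈ s, a k ^ α * b k ^ β) * (A * B)
        = ∑ k ∈ s, a k ^ α * b k ^ β * (A * B) := by rw [Finset.sum_mul]
      _ ≤ ∑ k ∈ s, (w₁ * (a k * B) + w₂ * (b k * A)) * (A ^ α * B ^ β) :=
          Finset.sum_le_sum key
      _ = (∑ k ∈ s, (w₁ * (a k * B) + w₂ * (b k * A))) * (A ^ α * B ^ β) := by
          rw [← Finset.sum_mul]
      _ = (A ^ α * B ^ β) * (A * B) := by rw [hsum]; ring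
  have hABpos : 0 < A * B := by positivity
  exact le_of_mul_le_mul_right main hABpos

lemma aux_pow_entry {n : ℕ} (M : Matrix (Fin n) (Fin n) NNReal) {α β : ℝ}
    (hα : 0 ≤ α) (hβ : 0 ≤ β) (hab : 1 ≤ α + β) :
    ∀ (m : ℕ) (i j : Fin n),
      ((Matrix.of fun i j => M i j ^ α * M j i ^ β) ^ m) i j
        ≤ ((M ^ m) i j) ^ α * ((M ^ m) j i) ^ β := by
  intro m
  induction m with
  | zero =>
    intro i j
    simp only [pow_zero, Matrix.one_apply]
    rcases eq_or_ne i j with rfl | h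
    · simp
    · simp [h, Ne.symm h]
  | succ m ih =>
    intro i j
    rw [pow_succ, Matrix.mul_apply]
    calc ∑ k, ((Matrix.of fun i j => M i j ^ α * M j i ^ β) ^ m) i k
            * (Matrix.of fun i j => M i j ^ α * M j i ^ β) k j
        ≤ ∑ k, (((M ^ m) i k) ^ α * ((M ^ m) k i) ^ β) * (M k j ^ α * M j k ^ β) := by
          apply Finset.sum_le_sum
          intro k _
          exact mul_le_mul_left (ih i k) _
      _ = ∑ k, ((M ^ m) i k * M k j) ^ α * (M j k * (M ^ m) k i) ^ β := by
          apply Finset.sum_congr rfl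
          intro k _
          rw [NNReal.mul_rpow, NNReal.mul_rpow]
          ring
      _ ≤ (∑ k, (M ^ m) i k * M k j) ^ α * (∑ k, M j k * (M ^ m) k i) ^ β :=
          aux_key _ _ _ hα hβ hab
      _ = ((M ^ (m + 1)) i j) ^ α * ((M ^ (m + 1)) j i) ^ β := by
          have e1 : (M ^ (m + 1)) i j = ∑ k, (M ^ m) i k * M k j := by
            rw [pow_succ, Matrix.mul_apply]
          have e2 : (M ^ (m + 1)) j i = ∑ k, M j k * (M ^ m) k i := by
            rw [pow_succ', Matrix.mul_apply]
          rw [e1, e2]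

lemma aux_coord_le {n : ℕ} (y : EuclideanSpace ℂ (Fin n)) (i : Fin n) : ‖y i‖ ≤ ‖y‖ := by
  have h := norm_inner_le_norm (𝕜 := ℂ) (EuclideanSpace.single i (1 : ℂ)) y
  rw [EuclideanSpace.inner_single_left] at h
  simpa [EuclideanSpace.norm_single] using h

lemma aux_entry_le {n : ℕ} (A : Matrix (Fin n) (Fin n) ℂ) (i j : Fin n) :
    ‖A i j‖₊ ≤ ‖A‖₊ := by
  rw [← NNReal.coe_le_coe]
  push_cast [coe_nnnorm]
  have hx : ‖(EuclideanSpace.equiv (Fin n) ℂ).symm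
        (A *ᵥ ((EuclideanSpace.single j (1 : ℂ) : EuclideanSpace ℂ (Fin n)) : Fin n → ℂ))‖
      ≤ ‖A‖ * ‖(EuclideanSpace.single j (1 : ℂ) : EuclideanSpace ℂ (Fin n))‖ :=
    A.l2_opNorm_mulVec _
  rw [EuclideanSpace.norm_single, norm_one, mul_one] at hx
  refine le_trans ?_ hx
  have h2 := aux_coord_le ((EuclideanSpace.equiv (Fin n) ℂ).symm
    (A *ᵥ ((EuclideanSpace.single j (1 : ℂ) : EuclideanSpace ℂ (Fin n)) : Fin n → ℂ))) i
  have e : ((EuclideanSpace.equiv (Fin n) ℂ).symm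
      (A *ᵥ ((EuclideanSpace.single j (1 : ℂ) : EuclideanSpace ℂ (Fin n)) : Fin n → ℂ))) i
      = A i j := by
    show (A *ᵥ ((EuclideanSpace.single j (1 : ℂ) : EuclideanSpace ℂ (Fin n)) : Fin n → ℂ)) i = A i j
    have : ((EuclideanSpace.single j (1 : ℂ) : EuclideanSpace ℂ (Fin n)) : Fin n → ℂ)
        = Pi.single j 1 := rfl
    simp [this, Matrix.mulVec_single]
  rwa [e] at h2

lemma aux_norm_le_sum {n : ℕ} (A : Matrix (Fin n) (Fin n) ℂ) :
    ‖A‖₊ ≤ ∑ i : Fin n, ∑ j : Fin n, ‖A i j‖₊ := by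
  have hstd : ∀ (i j : Fin n) (c : ℂ), ‖Matrix.single i j c‖₊ ≤ ‖c‖₊ := by
    intro i j c
    rw [← NNReal.coe_le_coe]
    push_cast [coe_nnnorm]
    rw [Matrix.l2_opNorm_def]
    apply ContinuousLinearMap.opNorm_le_bound _ (norm_nonneg c)
    intro x
    rw [LinearEquiv.trans_apply, LinearMap.coe_toContinuousLinearMap',
      Matrix.toEuclideanLin_apply, Matrix.single_mulVec]
    have : (Function.update (0 : Fin n → ℂ) i (c * x.ofLp j))
        = Pi.single i (c * x j) := rfl
    rw [this]
    have : (WithLp.toLp 2 (Pi.single i (c * x j)) : EuclideanSpace ℂ (Fin n))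
        = EuclideanSpace.single i (c * x j) := rfl
    rw [this, EuclideanSpace.norm_single, norm_mul]
    have := aux_coord_le x j
    exact mul_le_mul_of_nonneg_left this (norm_nonneg c)
  calc ‖A‖₊ = ‖∑ i : Fin n, ∑ j : Fin n, Matrix.single i j (A i j)‖₊ := by
        rw [← Matrix.matrix_eq_sum_single A]
    _ ≤ ∑ i : Fin n, ‖∑ j : Fin n, Matrix.single i j (A i j)‖₊ := nnnorm_sum_le _ _
    _ ≤ ∑ i : Fin n, ∑ j : Fin n, ‖Matrix.single i j (A i j)‖₊ :=
        Finset.sum_le_sum fun i _ => nnnorm_sum_le _ _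
    _ ≤ ∑ i : Fin n, ∑ j : Fin n, ‖A i j‖₊ :=
        Finset.sum_le_sum fun i _ => Finset.sum_le_sum fun j _ => hstd i j (A i j)

theorem stmt12 {n : ℕ} (K : Matrix (Fin n) (Fin n) ℝ) (hK : ∀ i j, 0 ≤ K i j)
    (α β : ℝ) (hα : 0 ≤ α) (hβ : 0 ≤ β) (hab : 1 ≤ α + β) :
    specRad (Matrix.of fun i j => (K i j) ^ α * (K j i) ^ β) ≤
      specRad K ^ (α + β) := by
  classical
  set S : Matrix (Fin n) (Fin n) ℝ := Matrix.of fun i j => (K i j) ^ α * (K j i) ^ β with hS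
  set Kc : Matrix (Fin n) (Fin n) ℂ := K.map (algebraMap ℝ ℂ) with hKc
  set Sc : Matrix (Fin n) (Fin n) ℂ := S.map (algebraMap ℝ ℂ) with hSc
  set f : NNReal →+* ℂ := (algebraMap ℝ ℂ).comp NNReal.toRealHom with hf
  set M : Matrix (Fin n) (Fin n) NNReal := Matrix.of fun i j => (K i j).toNNReal with hM
  set S' : Matrix (Fin n) (Fin n) NNReal := Matrix.of fun i j => M i j ^ α * M j i ^ β with hS'
  have hfe : ∀ x : NNReal, ‖f x‖₊ = x := fun x => by
    simp [hf, NNReal.nnnorm_eq]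
  have hKcM : Kc = M.map f := by
    ext i j
    simp [hKc, hM, hf, Real.coe_toNNReal _ (hK i j)]
  have hScM : Sc = S'.map f := by
    ext i j
    simp [hSc, hS, hS', hM, hf, NNReal.coe_rpow, Real.coe_toNNReal _ (hK _ _)]
  have hpowK : ∀ m : ℕ, Kc ^ m = (M ^ m).map f := by
    intro m
    rw [hKcM, ← RingHom.mapMatrix_apply, ← RingHom.mapMatrix_apply, ← map_pow]
  have hpowS : ∀ m : ℕ, Sc ^ m = (S' ^ m).map f := by
    intro m
    rw [hScM, ← RingHom.mapMatrix_apply, ← RingHom.mapMatrix_apply, ← map_pow]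
  set c : NNReal := (n : NNReal) * n + 1 with hc
  have bound : ∀ m : ℕ, ‖Sc ^ m‖₊ ≤ c * ‖Kc ^ m‖₊ ^ (α + β) := by
    intro m
    have hKnorm : ∀ i j, (M ^ m) i j ≤ ‖Kc ^ m‖₊ := by
      intro i j
      have : ‖(Kc ^ m) i j‖₊ = (M ^ m) i j := by
        rw [hpowK m, Matrix.map_apply, hfe]
      rw [← this]
      exact aux_entry_le _ i j
    calc ‖Sc ^ m‖₊ ≤ ∑ i : Fin n, ∑ j : Fin n, ‖(Sc ^ m) i j‖₊ := aux_norm_le_sum _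
      _ = ∑ i : Fin n, ∑ j : Fin n, (S' ^ m) i j := by
          apply Finset.sum_congr rfl; intro i _; apply Finset.sum_congr rfl; intro j _
          rw [hpowS m, Matrix.map_apply, hfe]
      _ ≤ ∑ i : Fin n, ∑ j : Fin n, ((M ^ m) i j) ^ α * ((M ^ m) j i) ^ β :=
          Finset.sum_le_sum fun i _ => Finset.sum_le_sum fun j _ =>
            aux_pow_entry M hα hβ hab m i j
      _ ≤ ∑ _i : Fin n, ∑ _j : Fin n, ‖Kc ^ m‖₊ ^ α * ‖Kc ^ m‖₊ ^ β :=
          Finset.sum_le_sum fun i _ => Finset.sum_le_sum fun j _ =>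
            mul_le_mul' (NNReal.rpow_le_rpow (hKnorm i j) hα)
              (NNReal.rpow_le_rpow (hKnorm j i) hβ)
      _ = ((n : NNReal) * n) * (‖Kc ^ m‖₊ ^ α * ‖Kc ^ m‖₊ ^ β) := by
          simp [Finset.sum_const, mul_assoc, nsmul_eq_mul]
      _ = ((n : NNReal) * n) * ‖Kc ^ m‖₊ ^ (α + β) := by
          rw [← NNReal.rpow_add_of_nonneg _ hα hβ]
      _ ≤ c * ‖Kc ^ m‖₊ ^ (α + β) := by
          apply mul_le_mul_left
          rw [hc]
          exact le_add_of_nonneg_right zero_le_one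
  have hGS : Tendsto (fun m : ℕ => (‖Sc ^ m‖₊ : ℝ≥0∞) ^ (1 / (m : ℝ))) atTop
      (𝓝 (spectralRadius ℂ Sc)) :=
    spectrum.pow_nnnorm_pow_one_div_tendsto_nhds_spectralRadius Sc
  have hGK : Tendsto (fun m : ℕ => (‖Kc ^ m‖₊ : ℝ≥0∞) ^ (1 / (m : ℝ))) atTop
      (𝓝 (spectralRadius ℂ Kc)) :=
    spectrum.pow_nnnorm_pow_one_div_tendsto_nhds_spectralRadius Kc
  have hineq : ∀ m : ℕ, (‖Sc ^ m‖₊ : ℝ≥0∞) ^ (1 / (m : ℝ))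
      ≤ (c : ℝ≥0∞) ^ (1 / (m : ℝ)) * ((‖Kc ^ m‖₊ : ℝ≥0∞) ^ (1 / (m : ℝ))) ^ (α + β) := by
    intro m
    have h0 : (0 : ℝ) ≤ 1 / (m : ℝ) := by positivity
    calc (‖Sc ^ m‖₊ : ℝ≥0∞) ^ (1 / (m : ℝ))
        ≤ ((c * ‖Kc ^ m‖₊ ^ (α + β) : NNReal) : ℝ≥0∞) ^ (1 / (m : ℝ)) :=
          ENNReal.rpow_le_rpow (ENNReal.coe_le_coe.2 (bound m)) h0
      _ = ((c : ℝ≥0∞) * ((‖Kc ^ m‖₊ : ℝ≥0∞)) ^ (α + β)) ^ (1 / (m : ℝ)) := by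
          rw [ENNReal.coe_mul, ENNReal.coe_rpow_of_nonneg _ (by linarith)]
      _ = (c : ℝ≥0∞) ^ (1 / (m : ℝ)) * (((‖Kc ^ m‖₊ : ℝ≥0∞)) ^ (α + β)) ^ (1 / (m : ℝ)) :=
          ENNReal.mul_rpow_of_nonneg _ _ h0
      _ = (c : ℝ≥0∞) ^ (1 / (m : ℝ)) * ((‖Kc ^ m‖₊ : ℝ≥0∞) ^ (1 / (m : ℝ))) ^ (α + β) := by
          rw [← ENNReal.rpow_mul, ← ENNReal.rpow_mul, mul_comm (α + β) (1 / (m : ℝ))]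
  have hc1 : Tendsto (fun m : ℕ => (c : ℝ≥0∞) ^ (1 / (m : ℝ))) atTop (𝓝 1) := by
    have hc0 : (c : ℝ) ≠ 0 := by positivity
    have h1 : Tendsto (fun m : ℕ => 1 / (m : ℝ)) atTop (𝓝 0) :=
      tendsto_one_div_atTop_nhds_zero_nat
    have h2 : Tendsto (fun m : ℕ => (c : ℝ) ^ (1 / (m : ℝ))) atTop (𝓝 1) := by
      have := (Real.continuousAt_const_rpow (a := (c : ℝ)) (b := 0) hc0).tendsto.comp h1
      simpa [Function.comp_def, Real.rpow_zero] using this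
    have h3 : Tendsto (fun m : ℕ => (c ^ (1 / (m : ℝ)) : NNReal)) atTop (𝓝 1) := by
      rw [← NNReal.tendsto_coe]
      simpa [NNReal.coe_rpow] using h2
    have h4 := ENNReal.tendsto_coe.mpr h3
    have : ∀ m : ℕ, ((c ^ (1 / (m : ℝ)) : NNReal) : ℝ≥0∞) = (c : ℝ≥0∞) ^ (1 / (m : ℝ)) := by
      intro m
      exact ENNReal.coe_rpow_of_nonneg _ (by positivity)
    have h5 : (fun m : ℕ => ((c ^ (1 / (m : ℝ)) : NNReal) : ℝ≥0∞))
        = fun m : ℕ => (c : ℝ≥0∞) ^ (1 / (m : ℝ)) := funext this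
    rw [h5] at h4
    exact h4
  have hK2 : Tendsto (fun m : ℕ => ((‖Kc ^ m‖₊ : ℝ≥0∞) ^ (1 / (m : ℝ))) ^ (α + β)) atTop
      (𝓝 ((spectralRadius ℂ Kc) ^ (α + β))) :=
    hGK.ennrpow_const (α + β)
  have hlim : Tendsto (fun m : ℕ => (c : ℝ≥0∞) ^ (1 / (m : ℝ))
      * ((‖Kc ^ m‖₊ : ℝ≥0∞) ^ (1 / (m : ℝ))) ^ (α + β)) atTop
      (𝓝 (1 * (spectralRadius ℂ Kc) ^ (α + β))) :=
    ENNReal.Tendsto.mul hc1 (Or.inl one_ne_zero) hK2 (Or.inr ENNReal.one_ne_top)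
  have hfinal := le_of_tendsto_of_tendsto' hGS hlim hineq
  rw [one_mul] at hfinal
  exact hfinal
end

section
/- Let K be a nonnegative n×n matrix, α ∈ [0,1], and define ρ_j = r(S_α(K^{2^j}))^{2^{-j}} for j ≥ 0. Then the sequence ρ_j is nondecreasing and bounded above by r(K): r(S_α(K)) = ρ₀ ≤ ρ₁ ≤ ⋯ ≤ ρ_j ≤ r(K) for every j. -/
open scoped ENNReal
open Finset
open Filter
open scoped Topology

attribute [local instance] Matrix.frobeniusSeminormedAddCommGroup
  Matrix.frobeniusNormedAddCommGroup Matrix.frobeniusNormedSpace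
  Matrix.frobeniusNormedRing Matrix.frobeniusNormedAlgebra

section Aux

variable {n : ℕ}

/-- Entrywise weighted geometric mean matrix. -/
noncomputable def Sa (α : ℝ) (A : Matrix (Fin n) (Fin n) ℝ) : Matrix (Fin n) (Fin n) ℝ :=
  Matrix.of fun i k => (A i k) ^ α * (A k i) ^ (1 - α)

lemma pow_entry_nonneg {A : Matrix (Fin n) (Fin n) ℝ} (hA : ∀ i j, 0 ≤ A i j) (m : ℕ) :
    ∀ i j, 0 ≤ (A ^ m) i j := by
  induction m with
  | zero => intro i j; rw [pow_zero]; by_cases h : i = j <;> simp [Matrix.one_apply, h]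
  | succ m ih =>
      intro i j
      rw [pow_succ, Matrix.mul_apply]
      exact Finset.sum_nonneg fun k _ => mul_nonneg (ih i k) (hA k j)

lemma Sa_nonneg {A : Matrix (Fin n) (Fin n) ℝ} (hA : ∀ i j, 0 ≤ A i j) (α : ℝ) :
    ∀ i j, 0 ≤ Sa α A i j := fun i j =>
  mul_nonneg (Real.rpow_nonneg (hA i j) _) (Real.rpow_nonneg (hA j i) _)

lemma my_hoelder {ι : Type*} (s : Finset ι) (x y : ι → ℝ) (hx : ∀ i ∈ s, 0 ≤ x i)
    (hy : ∀ i ∈ s, 0 ≤ y i) {α : ℝ} (h0 : 0 ≤ α) (h1 : α ≤ 1) :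
    ∑ i ∈ s, x i ^ α * y i ^ (1 - α) ≤ (∑ i ∈ s, x i) ^ α * (∑ i ∈ s, y i) ^ (1 - α) := by
  rcases eq_or_lt_of_le h0 with h0' | h0'
  · simp [← h0']
  rcases eq_or_lt_of_le h1 with h1' | h1'
  · simp [h1']
  have hα1 : (0:ℝ) < 1 - α := by linarith
  have hpq : Real.HolderConjugate (1/α) (1/(1-α)) := by
    rw [Real.holderConjugate_iff]
    constructor
    · rw [lt_div_iff₀ h0']; linarith
    · field_simp; ring
  have := Real.inner_le_Lp_mul_Lq_of_nonneg (f := fun i => x i ^ α) (g := fun i => y i ^ (1-α))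
    (s := s) hpq (fun i hi => Real.rpow_nonneg (hx i hi) _)
    (fun i hi => Real.rpow_nonneg (hy i hi) _)
  simp only [one_div_one_div] at this
  calc ∑ i ∈ s, x i ^ α * y i ^ (1 - α) ≤
      (∑ i ∈ s, (x i ^ α) ^ (1/α)) ^ α * (∑ i ∈ s, (y i ^ (1-α)) ^ (1/(1-α))) ^ (1-α) := this
    _ = (∑ i ∈ s, x i) ^ α * (∑ i ∈ s, y i) ^ (1 - α) := by
        congr 1
        · congr 1; apply Finset.sum_congr rfl; intro i hi
          rw [← Real.rpow_mul (hx i hi), mul_one_div_cancel (ne_of_gt h0'), Real.rpow_one]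
        · congr 1; apply Finset.sum_congr rfl; intro i hi
          rw [← Real.rpow_mul (hy i hi), mul_one_div_cancel (ne_of_gt hα1), Real.rpow_one]

lemma Sa_pow_le {A : Matrix (Fin n) (Fin n) ℝ} (hA : ∀ i j, 0 ≤ A i j) {α : ℝ}
    (h0 : 0 ≤ α) (h1 : α ≤ 1) (m : ℕ) :
    ∀ i j, ((Sa α A) ^ m) i j ≤ ((A ^ m) i j) ^ α * ((A ^ m) j i) ^ (1 - α) := by
  induction m with
  | zero =>
      intro i j
      simp only [pow_zero]
      by_cases h : i = j
      · subst h; simp [Matrix.one_apply]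
      · rw [Matrix.one_apply_ne h, Matrix.one_apply_ne (Ne.symm h)]
        exact mul_nonneg (Real.rpow_nonneg le_rfl _) (Real.rpow_nonneg le_rfl _) |>.trans_eq' rfl
  | succ m ih =>
      intro i j
      rw [pow_succ, Matrix.mul_apply]
      have step1 : ∑ k, ((Sa α A) ^ m) i k * (Sa α A) k j ≤
          ∑ k, ((A ^ m) i k * A k j) ^ α * ((A j k) * ((A ^ m) k i)) ^ (1 - α) := by
        apply Finset.sum_le_sum
        intro k _
        have h2 : ((Sa α A) ^ m) i k * Sa α A k j ≤
            (((A ^ m) i k) ^ α * ((A ^ m) k i) ^ (1 - α)) * ((A k j) ^ α * (A j k) ^ (1 - α)) := by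
          apply mul_le_mul_of_nonneg_right (ih i k)
          exact Sa_nonneg hA α k j
        refine h2.trans (le_of_eq ?_)
        rw [Real.mul_rpow (pow_entry_nonneg hA m i k) (hA k j),
          Real.mul_rpow (hA j k) (pow_entry_nonneg hA m k i)]
        ring
      refine step1.trans ?_
      have := my_hoelder Finset.univ (fun k => (A ^ m) i k * A k j)
        (fun k => A j k * (A ^ m) k i)
        (fun k _ => mul_nonneg (pow_entry_nonneg hA m i k) (hA k j))
        (fun k _ => mul_nonneg (hA j k) (pow_entry_nonneg hA m k i)) h0 h1
      refine this.trans (le_of_eq ?_)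
      rw [← Matrix.mul_apply, ← pow_succ]
      congr 1
      rw [← Matrix.mul_apply, ← pow_succ']

lemma map_pow' (B : Matrix (Fin n) (Fin n) ℝ) (m : ℕ) :
    (B.map (algebraMap ℝ ℂ)) ^ m = (B ^ m).map (algebraMap ℝ ℂ) := by
  rw [← RingHom.mapMatrix_apply, ← RingHom.mapMatrix_apply, map_pow]

lemma nnnorm_map_eq (B : Matrix (Fin n) (Fin n) ℝ) :
    ‖B.map (algebraMap ℝ ℂ)‖₊ = ‖B‖₊ :=
  Matrix.frobenius_nnnorm_map_eq B _ fun a => by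
    simp [Complex.coe_algebraMap]

lemma specRad_le_of_nnnorm_pow_le {B C : Matrix (Fin n) (Fin n) ℝ}
    (h : ∀ m : ℕ, ‖B ^ m‖₊ ≤ ‖C ^ m‖₊) : specRad B ≤ specRad C := by
  refine le_of_tendsto_of_tendsto'
    (spectrum.pow_nnnorm_pow_one_div_tendsto_nhds_spectralRadius (B.map (algebraMap ℝ ℂ)))
    (spectrum.pow_nnnorm_pow_one_div_tendsto_nhds_spectralRadius (C.map (algebraMap ℝ ℂ)))
    (fun m => ?_)
  have : ‖(B.map (algebraMap ℝ ℂ)) ^ m‖₊ ≤ ‖(C.map (algebraMap ℝ ℂ)) ^ m‖₊ := by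
    rw [map_pow', map_pow', nnnorm_map_eq, nnnorm_map_eq]; exact h m
  exact ENNReal.rpow_le_rpow (by exact_mod_cast this) (by positivity)

lemma specRad_pow (B : Matrix (Fin n) (Fin n) ℝ) {k : ℕ} (hk : 0 < k) :
    specRad (B ^ k) = (specRad B) ^ k := by
  unfold specRad
  rw [← map_pow']
  set B' := B.map (algebraMap ℝ ℂ) with hB'
  have h1 := spectrum.pow_nnnorm_pow_one_div_tendsto_nhds_spectralRadius B'
  have hmono : StrictMono (fun m : ℕ => k * m) := fun a b hab =>
    (Nat.mul_lt_mul_left hk).mpr hab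
  have h2 : Tendsto (fun m : ℕ => (‖B' ^ (k * m)‖₊ : ℝ≥0∞) ^ (1 / (k * m : ℕ) : ℝ))
      atTop (𝓝 (spectralRadius ℂ B')) := h1.comp hmono.tendsto_atTop
  have h3 := spectrum.pow_nnnorm_pow_one_div_tendsto_nhds_spectralRadius (B' ^ k)
  have h4 : Tendsto (fun m : ℕ => ((‖(B' ^ k) ^ m‖₊ : ℝ≥0∞) ^ (1 / (m:ℕ) : ℝ)) ^ ((k:ℝ)⁻¹))
      atTop (𝓝 ((spectralRadius ℂ (B' ^ k)) ^ ((k:ℝ)⁻¹))) :=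
    (ENNReal.continuous_rpow_const.tendsto _).comp h3
  have heq : (fun m : ℕ => ((‖(B' ^ k) ^ m‖₊ : ℝ≥0∞) ^ (1 / (m:ℕ) : ℝ)) ^ ((k:ℝ)⁻¹)) =
      fun m : ℕ => (‖B' ^ (k * m)‖₊ : ℝ≥0∞) ^ (1 / (k * m : ℕ) : ℝ) := by
    funext m
    rw [← pow_mul, ← ENNReal.rpow_mul]
    congr 1
    push_cast
    rcases Nat.eq_zero_or_pos m with hm | hm
    · simp [hm]
    · field_simp
  rw [heq] at h4
  have h5 := tendsto_nhds_unique h2 h4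
  have hkne : (k:ℝ) ≠ 0 := Nat.cast_ne_zero.mpr hk.ne'
  calc spectralRadius ℂ (B' ^ k)
      = ((spectralRadius ℂ (B' ^ k)) ^ ((k:ℝ)⁻¹)) ^ (k:ℕ) := by
        rw [← ENNReal.rpow_natCast _ k, ← ENNReal.rpow_mul, inv_mul_cancel₀ hkne,
          ENNReal.rpow_one]
    _ = (spectralRadius ℂ B') ^ k := by rw [← h5]

lemma fro_nnnorm_mono {B C : Matrix (Fin n) (Fin n) ℝ} (hB : ∀ i j, 0 ≤ B i j)
    (h : ∀ i j, B i j ≤ C i j) : ‖B‖₊ ≤ ‖C‖₊ := by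
  rw [Matrix.frobenius_nnnorm_def, Matrix.frobenius_nnnorm_def]
  apply NNReal.rpow_le_rpow _ (by norm_num)
  apply Finset.sum_le_sum; intro i _
  apply Finset.sum_le_sum; intro j _
  apply NNReal.rpow_le_rpow _ (by norm_num)
  have : ‖B i j‖ ≤ ‖C i j‖ := by
    rw [Real.norm_eq_abs, Real.norm_eq_abs, abs_of_nonneg (hB i j),
      abs_of_nonneg ((hB i j).trans (h i j))]
    exact h i j
  exact this

lemma specRad_mono {B C : Matrix (Fin n) (Fin n) ℝ} (hB : ∀ i j, 0 ≤ B i j)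
    (h : ∀ i j, B i j ≤ C i j) : specRad B ≤ specRad C := by
  have hC : ∀ i j, 0 ≤ C i j := fun i j => (hB i j).trans (h i j)
  have hpow : ∀ m : ℕ, ∀ i j, (B ^ m) i j ≤ (C ^ m) i j := by
    intro m
    induction m with
    | zero => intro i j; exact le_rfl
    | succ m ih =>
        intro i j
        rw [pow_succ, pow_succ, Matrix.mul_apply, Matrix.mul_apply]
        apply Finset.sum_le_sum
        intro k _
        exact mul_le_mul (ih i k) (h k j) (hB k j) (pow_entry_nonneg hC m i k)
  exact specRad_le_of_nnnorm_pow_le fun m =>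
    fro_nnnorm_mono (pow_entry_nonneg hB m) (hpow m)

lemma fro_geom_le {M P : Matrix (Fin n) (Fin n) ℝ} {α : ℝ} (h0 : 0 ≤ α) (h1 : α ≤ 1)
    (hM : ∀ i j, 0 ≤ M i j) (hP : ∀ i j, 0 ≤ P i j)
    (hle : ∀ i j, M i j ≤ (P i j) ^ α * (P j i) ^ (1 - α)) : ‖M‖₊ ≤ ‖P‖₊ := by
  have key : ∑ p : Fin n × Fin n, ‖M p.1 p.2‖₊ ^ (2:ℝ) ≤
      ∑ p : Fin n × Fin n, ‖P p.1 p.2‖₊ ^ (2:ℝ) := by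
    rw [← NNReal.coe_le_coe]
    push_cast
    have e1 : ∀ (Q : Matrix (Fin n) (Fin n) ℝ) (hQ : ∀ i j, 0 ≤ Q i j) (p : Fin n × Fin n),
        (‖Q p.1 p.2‖ : ℝ) ^ (2:ℝ) = (Q p.1 p.2) ^ (2:ℝ) := fun Q hQ p => by
      rw [Real.norm_eq_abs, abs_of_nonneg (hQ p.1 p.2)]
    rw [Finset.sum_congr rfl fun p _ => e1 M hM p, Finset.sum_congr rfl fun p _ => e1 P hP p]
    have step1 : ∑ p : Fin n × Fin n, (M p.1 p.2) ^ (2:ℝ) ≤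
        ∑ p : Fin n × Fin n, ((P p.1 p.2) ^ (2:ℝ)) ^ α * ((P p.2 p.1) ^ (2:ℝ)) ^ (1 - α) := by
      apply Finset.sum_le_sum
      intro p _
      have hb := Real.rpow_le_rpow (hM p.1 p.2) (hle p.1 p.2) (by norm_num : (0:ℝ) ≤ 2)
      refine hb.trans (le_of_eq ?_)
      rw [Real.mul_rpow (Real.rpow_nonneg (hP p.1 p.2) _) (Real.rpow_nonneg (hP p.2 p.1) _),
        ← Real.rpow_mul (hP p.1 p.2), ← Real.rpow_mul (hP p.2 p.1),
        ← Real.rpow_mul (hP p.1 p.2), ← Real.rpow_mul (hP p.2 p.1)]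
      ring_nf
    refine step1.trans ?_
    have hoe := my_hoelder Finset.univ (fun p : Fin n × Fin n => (P p.1 p.2) ^ (2:ℝ))
      (fun p : Fin n × Fin n => (P p.2 p.1) ^ (2:ℝ))
      (fun p _ => Real.rpow_nonneg (hP p.1 p.2) _)
      (fun p _ => Real.rpow_nonneg (hP p.2 p.1) _) h0 h1
    refine hoe.trans (le_of_eq ?_)
    have hswap : ∑ p : Fin n × Fin n, (P p.2 p.1) ^ (2:ℝ) =
        ∑ p : Fin n × Fin n, (P p.1 p.2) ^ (2:ℝ) :=
      Fintype.sum_equiv (Equiv.prodComm _ _) _ _ fun p => rfl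
    rw [hswap, ← Real.rpow_add' (Finset.sum_nonneg fun p _ => Real.rpow_nonneg (hP p.1 p.2) _)
      (by norm_num)]
    norm_num
  rw [Matrix.frobenius_nnnorm_def, Matrix.frobenius_nnnorm_def]
  apply NNReal.rpow_le_rpow _ (by norm_num)
  calc ∑ i, ∑ j, ‖M i j‖₊ ^ (2:ℝ) = ∑ p : Fin n × Fin n, ‖M p.1 p.2‖₊ ^ (2:ℝ) := by
        rw [← Finset.sum_product']; rfl
    _ ≤ ∑ p : Fin n × Fin n, ‖P p.1 p.2‖₊ ^ (2:ℝ) := key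
    _ = ∑ i, ∑ j, ‖P i j‖₊ ^ (2:ℝ) := by rw [← Finset.sum_product']; rfl

lemma specRad_Sa_le {A : Matrix (Fin n) (Fin n) ℝ} (hA : ∀ i j, 0 ≤ A i j) {α : ℝ}
    (h0 : 0 ≤ α) (h1 : α ≤ 1) : specRad (Sa α A) ≤ specRad A := by
  apply specRad_le_of_nnnorm_pow_le
  intro m
  exact fro_geom_le h0 h1 (pow_entry_nonneg (Sa_nonneg hA α) m) (pow_entry_nonneg hA m)
    (Sa_pow_le hA h0 h1 m)

end Aux

theorem stmt13 {n : ℕ} (K : Matrix (Fin n) (Fin n) ℝ) (hK : ∀ i j, 0 ≤ K i j)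
    (α : ℝ) (hα : α ∈ Set.Icc (0:ℝ) 1)
    (ρ : ℕ → ℝ≥0∞)
    (hρ : ∀ j, ρ j =
      (specRad (Matrix.of fun i k => ((K ^ (2 ^ j)) i k) ^ α * ((K ^ (2 ^ j)) k i) ^ (1 - α))) ^
        ((2:ℝ) ^ (-(j:ℝ)))) :
    (ρ 0 = specRad (Matrix.of fun i k => (K i k) ^ α * (K k i) ^ (1 - α))) ∧
      (∀ j, ρ j ≤ ρ (j + 1)) ∧ (∀ j, ρ j ≤ specRad K) := by
  obtain ⟨h0, h1⟩ := hα
  have hSa : ∀ j : ℕ,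
      (Matrix.of fun i k => ((K ^ (2 ^ j)) i k) ^ α * ((K ^ (2 ^ j)) k i) ^ (1 - α)) =
        Sa α (K ^ (2 ^ j)) := fun j => rfl
  refine ⟨?_, ?_, ?_⟩
  · rw [hρ 0, hSa 0]
    norm_num
    rfl
  · intro j
    rw [hρ j, hρ (j + 1), hSa j, hSa (j + 1)]
    have hKj : ∀ i k, 0 ≤ (K ^ (2 ^ j)) i k := pow_entry_nonneg hK _
    have hsq : (K ^ (2 ^ j)) ^ 2 = K ^ (2 ^ (j + 1)) := by
      rw [← pow_mul, ← pow_succ]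
    have step : specRad (Sa α (K ^ (2 ^ j))) ^ (2:ℕ) ≤ specRad (Sa α (K ^ (2 ^ (j + 1)))) := by
      rw [← specRad_pow _ (by norm_num : 0 < 2)]
      apply specRad_mono (pow_entry_nonneg (Sa_nonneg hKj α) 2)
      intro i k
      have := Sa_pow_le hKj h0 h1 2 i k
      rw [hsq] at this
      exact this
    have hexp : (2:ℝ) ^ (-(j:ℝ)) = 2 * (2:ℝ) ^ (-((j:ℝ) + 1)) := by
      rw [show (-(j:ℝ)) = 1 + (-((j:ℝ) + 1)) by ring, Real.rpow_add two_pos, Real.rpow_one]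
    have hcast : (-(((j:ℕ)+1 : ℕ)):ℝ) = -((j:ℝ) + 1) := by push_cast; ring
    calc specRad (Sa α (K ^ (2 ^ j))) ^ ((2:ℝ) ^ (-(j:ℝ)))
        = (specRad (Sa α (K ^ (2 ^ j))) ^ (2:ℕ)) ^ ((2:ℝ) ^ (-((j:ℝ) + 1))) := by
          rw [← ENNReal.rpow_natCast _ 2, ← ENNReal.rpow_mul, hexp]
          norm_num
      _ ≤ specRad (Sa α (K ^ (2 ^ (j + 1)))) ^ ((2:ℝ) ^ (-((j:ℝ) + 1))) :=
          ENNReal.rpow_le_rpow step (by positivity)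
      _ = specRad (Sa α (K ^ (2 ^ (j + 1)))) ^ ((2:ℝ) ^ (-(((j:ℕ)+1:ℕ)):ℝ)) := by
          rw [hcast]
  · intro j
    rw [hρ j, hSa j]
    have hKj : ∀ i k, 0 ≤ (K ^ (2 ^ j)) i k := pow_entry_nonneg hK _
    have step : specRad (Sa α (K ^ (2 ^ j))) ≤ specRad K ^ (2 ^ j : ℕ) := by
      rw [← specRad_pow _ (by positivity : 0 < 2 ^ j)]
      exact specRad_Sa_le hKj h0 h1
    calc specRad (Sa α (K ^ (2 ^ j))) ^ ((2:ℝ) ^ (-(j:ℝ)))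
        ≤ (specRad K ^ (2 ^ j : ℕ)) ^ ((2:ℝ) ^ (-(j:ℝ))) :=
          ENNReal.rpow_le_rpow step (by positivity)
      _ = specRad K := by
          rw [← ENNReal.rpow_natCast _ (2 ^ j), ← ENNReal.rpow_mul]
          have : ((2 ^ j : ℕ) : ℝ) * (2:ℝ) ^ (-(j:ℝ)) = 1 := by
            push_cast
            rw [← Real.rpow_natCast (2:ℝ) j, ← Real.rpow_add two_pos]
            norm_num
          rw [this, ENNReal.rpow_one]
end
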